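/- Let T be a semistandard Young tableau and w = w(T) its row reading word. If m_i(w) > 0 and p is the smallest index r such that m_i(w,r) = m_i(w), then w_p = i. In particular, the Young lowering operator f_i, which changes the entry of T corresponding to w_p to i+1, is well-defined. -/

import Mathlib

/-! ## Reading words and the lowering operators on Mathlib's semistandard
Young tableaux.

Mathlib uses the English convention with rows indexed from the top starting at
`0`; the paper's row reading word (rows left to right, from the top row of the
French diagram to the bottom one) therefore reads the rows in order of
decreasing Mathlib row index. -/

/-- The cells of the Young diagram `μ` in reading order: rows left to right,
from the bottom row (in English convention) to the top one. -/
def readingCells (μ : YoungDiagram) : List (ℕ × ℕ) :=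
  ((List.range (μ.colLen 0)).reverse).flatMap (fun i =>
    (List.range (μ.rowLen i)).map (fun j => (i, j)))

/-- The row reading word of a semistandard Young tableau. -/
def rowWord {μ : YoungDiagram} (T : SemistandardYoungTableau μ) : List ℕ :=
  (readingCells μ).map (fun rc => T rc.1 rc.2)

/-- `mAt i w r` is `m_i(w, r)`: the number of `i`'s minus the number of
`(i+1)`'s among the first `r` letters of `w`. -/
def mAt (i : ℕ) (w : List ℕ) (r : ℕ) : ℤ :=
  ((w.take r).count i : ℤ) - ((w.take r).count (i + 1) : ℤ)

/-- `mMax i w` is `m_i(w) = max_{1 ≤ r ≤ |w|} m_i(w, r)` (with value `0` for the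
empty word). -/
noncomputable def mMax (i : ℕ) (w : List ℕ) : ℤ :=
  WithBot.unbotD 0 (((List.range w.length).map (fun r => mAt i w (r + 1))).maximum)

/-- The 0-based position in the reading word of a tableau used by the lowering
operator `f_i`: the smallest index at which `m_i` attains its maximum. -/
noncomputable def lowerIdx {μ : YoungDiagram} (i : ℕ) (T : SemistandardYoungTableau μ) : ℕ :=
  (List.range (rowWord T).length).findIdx
    (fun r => decide (mAt i (rowWord T) (r + 1) = mMax i (rowWord T)))

/-- The lowering operator `f_i` on (fillings of) semistandard Young tableaux:
`youngLowerFun i T = none` when `f_i(T) = 0` (i.e. `m_i(w(T)) ≤ 0`); otherwise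
the entry at the cell corresponding to the leftmost position attaining
`m_i(w(T))` is changed to `i + 1`. -/
noncomputable def youngLowerFun {μ : YoungDiagram} (i : ℕ) (T : SemistandardYoungTableau μ) :
    Option (ℕ → ℕ → ℕ) :=
  if mMax i (rowWord T) ≤ 0 then none
  else
    match (readingCells μ)[lowerIdx i T]? with
    | none => none
    | some q => some (fun a b => if (a, b) = q then i + 1 else T a b)

/-- The weight of a filling of `μ`: the number of cells with entry `k`. -/
def wtM (μ : YoungDiagram) (f : ℕ → ℕ → ℕ) (k : ℕ) : ℕ :=
  (μ.cells.filter (fun rc => f rc.1 rc.2 = k)).card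


lemma mAt_succ_aux (i : ℕ) (w : List ℕ) (r : ℕ) (hr : r < w.length) :
    mAt i w (r + 1) = mAt i w r
      + ((if w[r] = i then 1 else 0) - (if w[r] = i + 1 then 1 else 0)) := by
  unfold mAt
  have h : w[r]? = some w[r] := by simp [hr]
  rw [List.take_succ, h]
  simp only [Option.toList_some, List.count_append, List.count_singleton']
  by_cases h1 : w[r] = i <;> by_cases h2 : w[r] = i + 1 <;>
    simp [h1, h2] <;> push_cast <;> ring

lemma step_eq_i {i : ℕ} {w : List ℕ} {r : ℕ} (hr : r < w.length)
    (hlt : mAt i w r < mAt i w (r + 1)) : w[r] = i := by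
  by_contra hne
  rw [mAt_succ_aux i w r hr, if_neg hne] at hlt
  split at hlt <;> omega

lemma le_mMax (i : ℕ) (w : List ℕ) (r : ℕ) (hr : r < w.length) :
    mAt i w (r + 1) ≤ mMax i w := by
  have hmem : mAt i w (r + 1) ∈ (List.range w.length).map (fun r => mAt i w (r + 1)) :=
    List.mem_map.mpr ⟨r, List.mem_range.mpr hr, rfl⟩
  have h := List.le_maximum_of_mem' hmem
  rw [mMax]
  cases hmax : ((List.range w.length).map (fun r => mAt i w (r + 1))).maximum with
  | bot => rw [hmax] at h; exact absurd h (by simp)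
  | coe a => rw [hmax] at h; rw [WithBot.unbotD_coe]; exact_mod_cast h

lemma mMax_attained (i : ℕ) (w : List ℕ) (hm : 0 < mMax i w) :
    ∃ r < w.length, mAt i w (r + 1) = mMax i w := by
  rw [mMax] at hm ⊢
  cases hmax : ((List.range w.length).map (fun r => mAt i w (r + 1))).maximum with
  | bot => rw [hmax] at hm; simp at hm
  | coe a =>
    have hamem := List.maximum_mem hmax
    obtain ⟨r, hr, he⟩ := List.mem_map.mp hamem
    exact ⟨r, List.mem_range.mp hr, by rw [WithBot.unbotD_coe]; exact he⟩

/-- Key word-level lemma: the letter at the first position attaining the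
maximum is `i`. -/
lemma key_letter (i : ℕ) (w : List ℕ) (hm : 0 < mMax i w) :
    (List.range w.length).findIdx
        (fun r => decide (mAt i w (r + 1) = mMax i w)) < w.length ∧
      w.getD ((List.range w.length).findIdx
        (fun r => decide (mAt i w (r + 1) = mMax i w))) 0 = i := by
  set P : ℕ → Bool := fun r => decide (mAt i w (r + 1) = mMax i w) with hP
  obtain ⟨r, hrn, hr⟩ := mMax_attained i w hm
  have hex : ∃ x ∈ List.range w.length, P x = true :=
    ⟨r, List.mem_range.mpr hrn, by simp [hP, hr]⟩
  have h1 := List.findIdx_lt_length_of_exists hex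
  rw [List.length_range] at h1
  set p := (List.range w.length).findIdx P with hp
  have hpn' : p < (List.range w.length).length := by rwa [List.length_range]
  have hpeq : mAt i w (p + 1) = mMax i w := by
    have h2 := List.findIdx_getElem (p := P) (xs := List.range w.length) (w := hpn')
    simp only [List.getElem_range] at h2
    rw [← hp] at h2
    simpa [hP] using h2
  have hprev : mAt i w p < mMax i w := by
    rcases Nat.eq_zero_or_pos p with h0 | h0
    · rw [h0]; simpa [mAt] using hm
    · have hk : p - 1 < p := by omega
      have hne := List.not_of_lt_findIdx (p := P) (xs := List.range w.length)
        (i := p - 1) (by rw [← hp]; exact hk)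
      simp only [List.getElem_range] at hne
      simp only [hP, decide_eq_false_iff_not] at hne
      have hle : mAt i w (p - 1 + 1) ≤ mMax i w := le_mMax i w (p - 1) (by omega)
      have : p - 1 + 1 = p := by omega
      rw [this] at hne hle
      omega
  refine ⟨h1, ?_⟩
  rw [List.getD_eq_getElem _ _ h1]
  exact step_eq_i h1 (by omega)

set_option maxHeartbeats 2000000 in
/-- If `m_i(w(T)) > 0` and `p` is the smallest index `r` with
`m_i(w(T), r) = m_i(w(T))`, then `w_p = i`; in particular the lowering operator
`f_i`, which changes the entry of `T` corresponding to `w_p` to `i + 1`, is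
well defined. -/
theorem young_lower_wellDefined (μ : YoungDiagram) (T : SemistandardYoungTableau μ)
    (hpos : ∀ rc ∈ μ.cells, 1 ≤ T rc.1 rc.2)
    (i : ℕ) (hi : 1 ≤ i) (hm : 0 < mMax i (rowWord T)) :
    lowerIdx i T < (rowWord T).length ∧
    (rowWord T).getD (lowerIdx i T) 0 = i ∧
    (readingCells μ).getD (lowerIdx i T) (0, 0) ∈ μ.cells ∧
    T ((readingCells μ).getD (lowerIdx i T) (0, 0)).1
      ((readingCells μ).getD (lowerIdx i T) (0, 0)).2 = i ∧
    youngLowerFun i T ≠ none := by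
  obtain ⟨hlt0, hwp0⟩ := key_letter i (rowWord T) hm
  have hlow : lowerIdx i T = (List.range (rowWord T).length).findIdx
      (fun r => decide (mAt i (rowWord T) (r + 1) = mMax i (rowWord T))) := by
    simp only [lowerIdx]
  have hlt : lowerIdx i T < (rowWord T).length := by rw [hlow]; exact hlt0
  have hwgetD : (rowWord T).getD (lowerIdx i T) 0 = i := by rw [hlow]; exact hwp0
  have hwp : (rowWord T)[lowerIdx i T]'hlt = i := by
    rw [List.getD_eq_getElem _ _ hlt] at hwgetD
    exact hwgetD
  have hlenrc : (readingCells μ).length = (rowWord T).length := by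
    rw [rowWord, List.length_map]
  have hprc : lowerIdx i T < (readingCells μ).length := by omega
  have hgetD : (readingCells μ).getD (lowerIdx i T) (0, 0) =
      (readingCells μ)[lowerIdx i T] := List.getD_eq_getElem _ _ hprc
  have hTval : T ((readingCells μ)[lowerIdx i T]'hprc).1
      ((readingCells μ)[lowerIdx i T]'hprc).2 = i := by
    have h2 : (rowWord T)[lowerIdx i T]'hlt =
        T ((readingCells μ)[lowerIdx i T]'hprc).1
          ((readingCells μ)[lowerIdx i T]'hprc).2 := by
      simp [rowWord]
    rw [← h2, hwp]
  have hsub : ∀ rc ∈ readingCells μ, rc ∈ μ.cells := by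
    intro rc hrc
    simp only [readingCells, List.mem_flatMap, List.mem_map] at hrc
    obtain ⟨a, _, j, hj, hje⟩ := hrc
    rw [YoungDiagram.mem_cells, ← hje]
    exact (μ.mem_iff_lt_rowLen).mpr (List.mem_range.mp hj)
  have hrcmem : (readingCells μ)[lowerIdx i T]'hprc ∈ μ.cells :=
    hsub _ (List.getElem_mem _)
  refine ⟨hlt, ?_, ?_, ?_, ?_⟩
  · rw [List.getD_eq_getElem _ _ hlt]; exact hwp
  · rw [hgetD]; exact hrcmem
  · rw [hgetD]; exact hTval
  · unfold youngLowerFun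
    rw [if_neg (by omega)]
    have hsome : (readingCells μ)[lowerIdx i T]? =
        some ((readingCells μ)[lowerIdx i T]'hprc) := by
      rw [List.getElem?_eq_getElem hprc]
    rw [hsome]
    simp
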